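/- For any complex Banach space $E$ and any $x \in B_E$ with $\|x\| + r < 1$ for some $r > 0$, the pseudohyperbolic distance satisfies $\rho(y,x) \leq \|y-x\|/r$ for all $y \in B(x,r)$, and consequently $\rho(y,x) \leq \|y-x\|/(1-\|x\|)$ for all $y$ with $\|y-x\| < 1-\|x\|$. -/

import Mathlib

open Metric Set

/-- The pseudohyperbolic distance on the unit ball of a complex Banach space. -/
noncomputable def pseudoDist {E : Type*} [NormedAddCommGroup E] [NormedSpace ℂ E]
    (x y : E) : ℝ :=
  sSup {t : ℝ | ∃ f : E → ℂ, DifferentiableOn ℂ f (ball (0 : E) 1) ∧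
    (∀ z ∈ ball (0 : E) 1, ‖f z‖ ≤ 1) ∧ f y = 0 ∧ t = ‖f x‖}

lemma pseudoDist_key {E : Type*} [NormedAddCommGroup E] [NormedSpace ℂ E]
    (x y : E) (s : ℝ) (hs : 0 < s) (hsub : ‖x‖ + s ≤ 1) (hy : ‖y - x‖ < s) :
    pseudoDist y x ≤ ‖y - x‖ / s := by
  have hds : 0 ≤ ‖y - x‖ / s := div_nonneg (norm_nonneg _) hs.le
  refine Real.sSup_le ?_ hds
  rintro t ⟨f, hdf, hbf, hfx, rfl⟩
  by_cases hxy : y = x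
  · simp [hxy, hfx, hds]
  have hnyx : 0 < ‖y - x‖ := by
    rw [norm_pos_iff]; exact sub_ne_zero.mpr hxy
  set v : E := ((s / ‖y - x‖ : ℝ) : ℂ) • (y - x) with hv
  have hvnorm : ‖v‖ = s := by
    rw [hv, norm_smul, Complex.norm_real, Real.norm_eq_abs, abs_of_pos (div_pos hs hnyx),
      div_mul_cancel₀ _ hnyx.ne']
  set g : ℂ → ℂ := fun w => f (x + w • v) with hg
  have hmemE : ∀ w : ℂ, w ∈ ball (0 : ℂ) 1 → x + w • v ∈ ball (0 : E) 1 := by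
    intro w hw
    rw [mem_ball_zero_iff] at hw ⊢
    calc ‖x + w • v‖ ≤ ‖x‖ + ‖w • v‖ := norm_add_le _ _
      _ = ‖x‖ + ‖w‖ * s := by rw [norm_smul, hvnorm]
      _ < ‖x‖ + 1 * s := by
          gcongr
      _ ≤ 1 := by linarith
  have hdg : DifferentiableOn ℂ g (ball (0 : ℂ) 1) := by
    apply hdf.comp
    · apply DifferentiableOn.const_add
      exact (differentiable_id.smul_const v).differentiableOn
    · exact hmemE
  have hg0 : g 0 = 0 := by simp [hg, hfx]
  -- the point corresponding to y
  set w₀ : ℂ := ((‖y - x‖ / s : ℝ) : ℂ) with hw₀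
  have hw₀mem : w₀ ∈ ball (0 : ℂ) 1 := by
    rw [mem_ball_zero_iff, hw₀, Complex.norm_real, Real.norm_eq_abs,
      abs_of_nonneg (div_nonneg (norm_nonneg _) hs.le)]
    exact (div_lt_one hs).mpr hy
  have hgw₀ : g w₀ = f y := by
    have : w₀ • v = y - x := by
      rw [hw₀, hv, smul_smul, ← Complex.ofReal_mul,
        div_mul_div_comm, mul_comm ‖y - x‖ s, div_self (by positivity), Complex.ofReal_one,
        one_smul]
    simp [hg, this]
  have key : ∀ ε : ℝ, 0 < ε → ‖f y‖ ≤ (1 + ε) * (‖y - x‖ / s) := by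
    intro ε hε
    have hmaps : MapsTo g (ball (0 : ℂ) 1) (ball (g 0) (1 + ε)) := by
      intro w hw
      rw [hg0, mem_ball_zero_iff]
      calc ‖g w‖ ≤ 1 := hbf _ (hmemE w hw)
        _ < 1 + ε := by linarith
    have := Complex.dist_le_div_mul_dist_of_mapsTo_ball hdg (hmaps.mono_right ball_subset_closedBall) hw₀mem
    rw [hg0, hgw₀, dist_zero_right, dist_zero_right, div_one, hw₀,
      Complex.norm_real, Real.norm_eq_abs, abs_of_nonneg (div_nonneg (norm_nonneg _) hs.le)] at this
    exact this
  have hT : Filter.Tendsto (fun ε : ℝ => (1 + ε) * (‖y - x‖ / s)) (nhdsWithin 0 (Set.Ioi 0))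
      (nhds (‖y - x‖ / s)) := by
    have : Filter.Tendsto (fun ε : ℝ => (1 + ε) * (‖y - x‖ / s)) (nhds 0)
        (nhds ((1 + 0) * (‖y - x‖ / s))) := by
      exact ((tendsto_const_nhds.add Filter.tendsto_id).mul tendsto_const_nhds)
    simpa using this.mono_left nhdsWithin_le_nhds
  refine ge_of_tendsto hT ?_
  filter_upwards [self_mem_nhdsWithin] with ε hε
  exact key ε hε

/-- If `‖x‖ + r < 1` then `ρ(y,x) ≤ ‖y-x‖/r` on `B(x,r)`, and consequently
`ρ(y,x) ≤ ‖y-x‖/(1-‖x‖)` whenever `‖y-x‖ < 1-‖x‖`. -/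
theorem pseudoDist_le {E : Type*} [NormedAddCommGroup E] [NormedSpace ℂ E] [CompleteSpace E]
    (x : E) (hx : x ∈ ball (0 : E) 1) (r : ℝ) (hr : 0 < r) (hxr : ‖x‖ + r < 1) :
    (∀ y : E, ‖y - x‖ < r → pseudoDist y x ≤ ‖y - x‖ / r) ∧
    (∀ y : E, ‖y - x‖ < 1 - ‖x‖ → pseudoDist y x ≤ ‖y - x‖ / (1 - ‖x‖)) := by
  have hx1 : ‖x‖ < 1 := mem_ball_zero_iff.mp hx
  constructor
  · intro y hy
    exact pseudoDist_key x y r hr hxr.le hy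
  · intro y hy
    exact pseudoDist_key x y (1 - ‖x‖) (by linarith) (by linarith) hy
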